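/- arXiv:1306.4288 — 3 statements merged into one kernel-verified Lean document; each statement's English description precedes it below -/
import Mathlib

section
/- Let n ≥ 2 and view the space T of alternating n × n matrices over F as an sl(n,F)-module via a·t = a t + t aᵀ. Then T is an irreducible sl(n,F)-module (over any field F). -/
open Matrix

section Aux

variable {F : Type*} [Field F] {n : ℕ}

private noncomputable def EE (i j : Fin n) : Matrix (Fin n) (Fin n) F :=
  single i j 1

private lemma EE_transpose (i j : Fin n) : (EE i j : Matrix (Fin n) (Fin n) F)ᵀ = EE j i := by
  ext a b
  simp [EE, single, transpose_apply, and_comm]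

private lemma EE_trace {i j : Fin n} (h : j ≠ i) :
    (EE i j : Matrix (Fin n) (Fin n) F).trace = 0 :=
  Matrix.trace_single_eq_of_ne i j (1 : F) h.symm

private noncomputable def AA (i j : Fin n) : Matrix (Fin n) (Fin n) F :=
  EE i j - EE j i

private lemma AA_swap (i j : Fin n) : (AA j i : Matrix (Fin n) (Fin n) F) = -AA i j := by
  simp [AA]

private lemma EE_mul (a b c d : Fin n) :
    (EE a b : Matrix (Fin n) (Fin n) F) * EE c d = if b = c then EE a d else 0 := by
  by_cases h : b = c
  · subst h
    simp [EE]
  · simp [EE, h, Matrix.single_mul_single_of_ne (1 : F) a b c h (1 : F)]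

private lemma act_AA {p q : Fin n} (k : Fin n) (hpq : p ≠ q) :
    (EE k p : Matrix (Fin n) (Fin n) F) * AA p q + AA p q * (EE k p)ᵀ = AA k q := by
  rw [EE_transpose]
  simp only [AA, mul_sub, sub_mul, EE_mul]
  simp only [if_pos rfl, if_neg hpq, if_neg (Ne.symm hpq)]
  abel

private lemma mulEE_left (k l a b : Fin n) (M : Matrix (Fin n) (Fin n) F) :
    ((EE k l : Matrix (Fin n) (Fin n) F) * M) a b = if a = k then M l b else 0 := by
  by_cases h : a = k
  · subst h; simp [EE]
  · simp [EE, h]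

private lemma mulEE_right (k l a b : Fin n) (M : Matrix (Fin n) (Fin n) F) :
    (M * (EE l k : Matrix (Fin n) (Fin n) F)) a b = if b = k then M a l else 0 := by
  by_cases h : b = k
  · subst h; simp [EE]
  · simp [EE, h]

private lemma AA_apply (i j a b : Fin n) :
    (AA i j : Matrix (Fin n) (Fin n) F) a b
      = (if i = a ∧ j = b then 1 else 0) - (if j = a ∧ i = b then 1 else 0) := by
  simp [AA, EE, single]

end Aux

theorem stmt_13 (F : Type*) [Field F] (n : ℕ) (hn : 2 ≤ n)
    (W : Submodule F (Matrix (Fin n) (Fin n) F))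
    (hWT : ∀ t ∈ W, tᵀ = -t ∧ ∀ i, t i i = 0)
    (hact : ∀ a : Matrix (Fin n) (Fin n) F, a.trace = 0 →
      ∀ t ∈ W, a * t + t * aᵀ ∈ W)
    (hW : W ≠ ⊥) :
    ∀ t : Matrix (Fin n) (Fin n) F, (tᵀ = -t ∧ ∀ i, t i i = 0) → t ∈ W := by
  classical
  obtain ⟨t₀, ht₀W, ht₀⟩ := Submodule.exists_mem_ne_zero_of_ne_bot hW
  obtain ⟨haT, hdiag⟩ := hWT t₀ ht₀W
  have hskew : ∀ a b, t₀ b a = -t₀ a b := by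
    intro a b
    have := congrFun (congrFun haT a) b
    simpa [transpose_apply] using this
  have : ∃ p q, t₀ p q ≠ 0 := by
    by_contra h
    push_neg at h
    exact ht₀ (by ext a b; simpa using h a b)
  obtain ⟨p, q, hpq0⟩ := this
  have hpq : p ≠ q := by
    rintro rfl
    exact hpq0 (hdiag p)
  -- Step 1: some AA r s (r ≠ s) lies in W.
  have base : ∃ r s : Fin n, r ≠ s ∧ (AA r s : Matrix (Fin n) (Fin n) F) ∈ W := by
    rcases lt_or_ge n 3 with h3 | h3
    · -- n = 2
      have hn2 : n = 2 := le_antisymm (by omega) hn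
      subst hn2
      have hdichot : ∀ i : Fin 2, i = p ∨ i = q := by
        intro i
        have h1 : i.val < 2 := i.isLt
        have h2 : p.val < 2 := p.isLt
        have h3' : q.val < 2 := q.isLt
        have h4 : p.val ≠ q.val := fun h => hpq (Fin.ext h)
        have : i.val = p.val ∨ i.val = q.val := by omega
        rcases this with h' | h'
        · exact Or.inl (Fin.ext h')
        · exact Or.inr (Fin.ext h')
      have hqp := hskew p q
      have key : t₀ = t₀ p q • (AA p q : Matrix (Fin 2) (Fin 2) F) := by
        ext a b
        rcases hdichot a with ha | ha <;> rcases hdichot b with hb | hb <;>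
          rw [ha, hb] <;>
          simp [AA_apply, hpq, Ne.symm hpq, hdiag, hqp, smul_eq_mul]
      refine ⟨p, q, hpq, ?_⟩
      have hA : (AA p q : Matrix (Fin 2) (Fin 2) F) = (t₀ p q)⁻¹ • t₀ := by
        nth_rewrite 2 [key]
        rw [smul_smul, inv_mul_cancel₀ hpq0, one_smul]
      rw [hA]
      exact W.smul_mem _ ht₀W
    · -- n ≥ 3
      have : ∃ r : Fin n, r ≠ p ∧ r ≠ q := by
        by_contra h
        push_neg at h
        have hsub : (Finset.univ : Finset (Fin n)) ⊆ {p, q} := by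
          intro r _
          rcases eq_or_ne r p with rfl | hr
          · simp
          · simp [h r hr]
        have := Finset.card_le_card hsub
        simp only [Finset.card_univ, Fintype.card_fin] at this
        have h2 : ({p, q} : Finset (Fin n)).card ≤ 2 :=
          (Finset.card_insert_le _ _).trans (by simp)
        omega
      obtain ⟨r, hrp, hrq⟩ := this
      set s : Matrix (Fin n) (Fin n) F := EE r q * t₀ + t₀ * (EE r q)ᵀ with hs
      have hsW : s ∈ W := hact _ (EE_trace hrq.symm) t₀ ht₀W
      have huW : (EE q p : Matrix (Fin n) (Fin n) F) * s + s * (EE q p)ᵀ ∈ W :=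
        hact _ (EE_trace hpq) s hsW
      have hqp := hskew p q
      have key : (EE q p : Matrix (Fin n) (Fin n) F) * s + s * (EE q p)ᵀ
          = t₀ p q • AA q r := by
        rw [EE_transpose]
        ext a b
        have hsapply : ∀ x y, s x y =
            (if x = r then t₀ q y else 0) + (if y = r then t₀ x q else 0) := by
          intro x y
          rw [hs, Matrix.add_apply, EE_transpose, mulEE_left, mulEE_right]
        rw [Matrix.add_apply, mulEE_left, mulEE_right, Matrix.smul_apply, AA_apply,
          hsapply p b, hsapply a p, if_neg hrp.symm, if_neg hrp.symm]
        have tri : ∀ x : Fin n, (x = q ∧ x ≠ r) ∨ (x = r ∧ x ≠ q) ∨ (x ≠ q ∧ x ≠ r) := by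
          intro x
          rcases eq_or_ne x q with h | h
          · exact Or.inl ⟨h, by rw [h]; exact Ne.symm hrq⟩
          · rcases eq_or_ne x r with h' | h'
            · exact Or.inr (Or.inl ⟨h', h⟩)
            · exact Or.inr (Or.inr ⟨h, h'⟩)
        rcases tri a with ⟨ha, ha'⟩ | ⟨ha, ha'⟩ | ⟨ha, ha'⟩ <;>
          rcases tri b with ⟨hb, hb'⟩ | ⟨hb, hb'⟩ | ⟨hb, hb'⟩ <;>
          simp [ha, ha', Ne.symm ha', hb, hb', Ne.symm hb', hqp, hrq, Ne.symm hrq,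
            smul_eq_mul] <;>
          first
            | (intro h; exact absurd h.symm hb)
            | (rw [if_neg fun h => ha h.symm])
            | (intro h; exact absurd h.symm ha)
      rw [key] at huW
      refine ⟨q, r, Ne.symm hrq, ?_⟩
      have hA : (AA q r : Matrix (Fin n) (Fin n) F)
          = (t₀ p q)⁻¹ • (t₀ p q • (AA q r : Matrix (Fin n) (Fin n) F)) := by
        rw [smul_smul, inv_mul_cancel₀ hpq0, one_smul]
      rw [hA]
      exact W.smul_mem _ huW
  obtain ⟨r, s, hrs, hAArs⟩ := base
  -- Step 2: propagation
  have L1 : ∀ (p q : Fin n), p ≠ q → (AA p q : Matrix (Fin n) (Fin n) F) ∈ W →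
      ∀ k, k ≠ q → (AA k q : Matrix (Fin n) (Fin n) F) ∈ W := by
    intro p q hpq' hA k _
    rcases eq_or_ne k p with rfl | hkp
    · exact hA
    · have := hact (EE k p) (EE_trace (Ne.symm hkp)) _ hA
      rwa [act_AA k hpq'] at this
  have L2 : ∀ (p q : Fin n), (AA p q : Matrix (Fin n) (Fin n) F) ∈ W →
      (AA q p : Matrix (Fin n) (Fin n) F) ∈ W := by
    intro p q h
    rw [AA_swap]
    exact W.neg_mem h
  have all : ∀ i j : Fin n, i ≠ j → (AA i j : Matrix (Fin n) (Fin n) F) ∈ W := by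
    intro i j hij
    rcases eq_or_ne i s with rfl | his
    · exact L2 _ _ (L1 r i hrs hAArs j (Ne.symm hij))
    · have h1 : (AA i s : Matrix (Fin n) (Fin n) F) ∈ W := L1 r s hrs hAArs i his
      have h2 : (AA s i : Matrix (Fin n) (Fin n) F) ∈ W := L2 _ _ h1
      have h3 : (AA j i : Matrix (Fin n) (Fin n) F) ∈ W := L1 s i (Ne.symm his) h2 j (Ne.symm hij)
      exact L2 _ _ h3
  -- Step 3
  intro t ⟨htT, htdiag⟩
  have htskew : ∀ a b, t b a = -t a b := by
    intro a b
    have := congrFun (congrFun htT a) b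
    simpa [transpose_apply] using this
  set c : Fin n → Fin n → F := fun i j => if i < j then t i j else 0 with hc
  have decomp : t = ∑ i : Fin n, ∑ j : Fin n,
      c i j • (AA i j : Matrix (Fin n) (Fin n) F) := by
    ext a b
    have e1 : ∑ i : Fin n, ∑ j : Fin n, c i j * (EE i j : Matrix (Fin n) (Fin n) F) a b
        = c a b := by
      rw [Finset.sum_eq_single a
            (fun x _ hx => Finset.sum_eq_zero fun y _ => by simp [EE, hx]) (by simp),
          Finset.sum_eq_single b (fun y _ hy => by simp [EE, hy]) (by simp)]
      simp [EE]
    have e2 : ∑ i : Fin n, ∑ j : Fin n, c i j * (EE j i : Matrix (Fin n) (Fin n) F) a b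
        = c b a := by
      rw [Finset.sum_eq_single b
            (fun x _ hx => Finset.sum_eq_zero fun y _ => by simp [EE, hx]) (by simp),
          Finset.sum_eq_single a (fun y _ hy => by simp [EE, hy]) (by simp)]
      simp [EE]
    simp only [Matrix.sum_apply, Matrix.smul_apply, AA, Matrix.sub_apply, smul_eq_mul,
      mul_sub, Finset.sum_sub_distrib]
    rw [e1, e2]
    rcases lt_trichotomy a b with h | h | h
    · simp [hc, h, not_lt.mpr h.le]
    · subst h
      simp [hc, htdiag a]
    · simp [hc, h, not_lt.mpr h.le, htskew a b]
  rw [decomp]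
  refine Submodule.sum_mem _ fun i _ => Submodule.sum_mem _ fun j _ => ?_
  by_cases hij : i < j
  · exact W.smul_mem _ (all i j (ne_of_lt hij))
  · simp [hc, hij]
end

section
/- Let char F ≠ 2, n ≥ 2, and view the space S of symmetric n × n matrices as an sl(n,F)-module via a·s = a s + s aᵀ. Then S is an irreducible sl(n,F)-module. -/
open Matrix

section Aux

variable {F : Type*} [Field F] {n : ℕ}

private lemma E_transpose (i j : Fin n) :
    (single i j (1:F))ᵀ = single j i 1 := by
  ext a b
  simp [single, transpose_apply, and_comm]

set_option maxHeartbeats 1000000 in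
private lemma key1 (i j : Fin n) (hij : i ≠ j) (s : Matrix (Fin n) (Fin n) F) :
    single i j (1:F) * (single i j (1:F) * s + s * single j i 1)
      + (single i j (1:F) * s + s * single j i 1) * single j i 1
      = (2 * s j j) • single i i 1 := by
  ext a b
  simp only [Matrix.add_apply, Matrix.mul_apply, Matrix.smul_apply, single, of_apply,
    smul_eq_mul, ite_mul, mul_ite, one_mul, mul_one, zero_mul, mul_zero]
  simp only [Finset.sum_ite_eq, Finset.sum_ite_eq', Finset.sum_add_distrib, ite_and,
    Finset.mem_univ, if_true]
  by_cases ha : a = i <;> by_cases hb : b = i <;>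
    simp [ha, hb, hij, hij.symm, two_mul] <;> split_ifs <;> simp_all

private lemma key2 (i j : Fin n) :
    single i j (1:F) * single j j 1
      + single j j (1:F) * single j i 1
      = single i j 1 + single j i 1 := by
  rw [single_mul_single_same, single_mul_single_same, one_mul]

private lemma key3 (i j : Fin n) (s : Matrix (Fin n) (Fin n) F) :
    (single i j (1:F) * s + s * single j i (1:F) : Matrix (Fin n) (Fin n) F) i i
      = s j i + s i j := by
  rw [Matrix.add_apply, single_mul_apply_same, one_mul,
    mul_single_apply_same, mul_one]

end Aux

theorem stmt_14 (F : Type*) [Field F] (hchar : ringChar F ≠ 2) (n : ℕ) (hn : 2 ≤ n)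
    (W : Submodule F (Matrix (Fin n) (Fin n) F))
    (hWS : ∀ s ∈ W, sᵀ = s)
    (hact : ∀ a : Matrix (Fin n) (Fin n) F, a.trace = 0 →
      ∀ s ∈ W, a * s + s * aᵀ ∈ W)
    (hW : W ≠ ⊥) :
    ∀ s : Matrix (Fin n) (Fin n) F, sᵀ = s → s ∈ W := by
  have h2 : (2 : F) ≠ 0 := Ring.two_ne_zero hchar
  -- action by E i j (i ≠ j)
  have hactE : ∀ (i j : Fin n), i ≠ j → ∀ s ∈ W,
      single i j (1:F) * s + s * single j i 1 ∈ W := by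
    intro i j hij s hs
    have := hact (single i j (1:F)) (trace_single_eq_of_ne i j 1 hij) s hs
    rwa [E_transpose] at this
  -- step 1: some element of W with nonzero diagonal entry
  obtain ⟨s₀, hs₀W, hs₀⟩ := (Submodule.ne_bot_iff W).mp hW
  have hdiag : ∃ t ∈ W, ∃ l, t l l ≠ 0 := by
    have : ∃ i j, s₀ i j ≠ 0 := by
      by_contra h
      push_neg at h
      exact hs₀ (by ext i j; simp [h i j])
    obtain ⟨i, j, hij0⟩ := this
    by_cases hij : i = j
    · refine ⟨s₀, hs₀W, i, ?_⟩
      subst hij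
      exact hij0
    · refine ⟨_, hactE i j hij s₀ hs₀W, i, ?_⟩
      rw [key3]
      have hsym : s₀ j i = s₀ i j := by
        conv_lhs => rw [← hWS s₀ hs₀W]
        simp [transpose_apply]
      rw [hsym, ← two_mul]
      exact mul_ne_zero h2 hij0
  obtain ⟨t, htW, l, htl⟩ := hdiag
  -- step 2: all E k k ∈ W
  have hEdiag1 : ∀ t ∈ W, ∀ l, t l l ≠ 0 → ∀ k, k ≠ l →
      (single k k (1:F)) ∈ W := by
    intro t htW l htl k hkl
    have h1 := hactE k l hkl t htW
    have h2' := hactE k l hkl _ h1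
    rw [key1 k l hkl] at h2'
    have := W.smul_mem (2 * t l l)⁻¹ h2'
    rwa [smul_smul, inv_mul_cancel₀ (mul_ne_zero h2 htl), one_smul] at this
  have hEdiag : ∀ k, (single k k (1:F)) ∈ W := by
    -- pick m ≠ l
    have hnt : Nontrivial (Fin n) := Fin.nontrivial_iff_two_le.mpr hn
    obtain ⟨m, hml⟩ := exists_ne l
    have hEm : (single m m (1:F)) ∈ W := hEdiag1 t htW l htl m hml
    intro k
    by_cases hkl : k = l
    · rw [hkl]
      exact hEdiag1 _ hEm m (by simp) l (Ne.symm hml)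
    · exact hEdiag1 t htW l htl k hkl
  -- step 3: all E i j + E j i ∈ W
  have hEsum : ∀ i j : Fin n, (single i j (1:F) + single j i 1) ∈ W := by
    intro i j
    by_cases hij : i = j
    · subst hij
      have := W.add_mem (hEdiag i) (hEdiag i)
      exact this
    · have := hactE i j hij _ (hEdiag j)
      rwa [key2] at this
  -- step 4: conclude
  intro s hsym
  have h2s : (2 : F) • s ∈ W := by
    have : (2 : F) • s = ∑ i : Fin n, ∑ j : Fin n,
        s i j • (single i j (1:F) + single j i 1) := by
      have e1 : ∑ i : Fin n, ∑ j : Fin n, s i j • single i j (1:F) = s := by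
        conv_rhs => rw [matrix_eq_sum_single s]
        refine Finset.sum_congr rfl fun i _ => Finset.sum_congr rfl fun j _ => ?_
        rw [smul_single, smul_eq_mul, mul_one]
      have e2 : ∑ i : Fin n, ∑ j : Fin n, s i j • single j i (1:F) = s := by
        rw [Finset.sum_comm]
        conv_rhs => rw [← hsym, matrix_eq_sum_single sᵀ]
        refine Finset.sum_congr rfl fun j _ => Finset.sum_congr rfl fun i _ => ?_
        rw [smul_single, smul_eq_mul, mul_one, transpose_apply]
      simp only [smul_add, Finset.sum_add_distrib, e1, e2, two_smul]
    rw [this]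
    exact Submodule.sum_mem W fun i _ => Submodule.sum_mem W fun j _ =>
      W.smul_mem _ (hEsum i j)
  have := W.smul_mem (2:F)⁻¹ h2s
  rwa [smul_smul, inv_mul_cancel₀ h2, one_smul] at this
end

section
/- Let char F = 2, n ≥ 1, and J the standard symplectic 2n × 2n matrix. Then the derived algebra L(J)^(1) = [L(J), L(J)] consists of all block matrices (A B; C Aᵀ) with A ∈ gl(n,F) and B, C alternating, and the second derived algebra L(J)^(2) consists of all such matrices with additionally trace(A) = 0. Consequently the quotient Lie algebra L(J)/L(J)^(2) is isomorphic to the Heisenberg Lie algebra of dimension 2n+1. -/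
open Matrix
set_option linter.unusedSectionVars false
set_option maxHeartbeats 1000000

namespace Stmt18

variable {F : Type*} [Field F] [CharP F 2] {n : ℕ}

local notation "Mn" => Matrix (Fin n) (Fin n) F
local notation "M2" => Matrix (Fin n ⊕ Fin n) (Fin n ⊕ Fin n) F

lemma neg_mat {α β : Type*} (M : Matrix α β F) : -M = M := by
  ext i j; exact CharTwo.neg_eq _

lemma sub_mat {α β : Type*} (M N : Matrix α β F) : M - N = M + N := by
  rw [sub_eq_add_neg, neg_mat]

lemma stdBasis_transpose {m k : Type*} [DecidableEq m] [DecidableEq k] (i : m) (j : k) (c : F) :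
    (Matrix.single i j c)ᵀ = Matrix.single j i c := by
  ext a b; simp [Matrix.single, and_comm]

variable (F n) in
def Jm : M2 := fromBlocks 0 1 1 0

variable (F n) in
def Lset : Set M2 := {X | Xᵀ * Jm F n = Jm F n * X}

variable (F n) in
def D1' : Submodule F M2 :=
  Submodule.span F {Z | ∃ X ∈ Lset F n, ∃ Y ∈ Lset F n, Z = X * Y - Y * X}

variable (F n) in
def D2' : Submodule F M2 :=
  Submodule.span F {Z | ∃ X ∈ D1' F n, ∃ Y ∈ D1' F n, Z = X * Y - Y * X}

lemma exists_blocks (X : M2) : ∃ P Q R S, X = fromBlocks P Q R S :=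
  ⟨_, _, _, _, (fromBlocks_toBlocks X).symm⟩

lemma mem_L_iff (P Q R S : Mn) :
    fromBlocks P Q R S ∈ Lset F n ↔ S = Pᵀ ∧ Qᵀ = Q ∧ Rᵀ = R := by
  unfold Lset Jm
  rw [Set.mem_setOf_eq, fromBlocks_transpose, fromBlocks_multiply, fromBlocks_multiply]
  simp only [Matrix.mul_zero, Matrix.mul_one, Matrix.zero_mul, Matrix.one_mul,
    add_zero, zero_add, fromBlocks_inj]
  constructor
  · rintro ⟨hR, hPS, hSP, hQ⟩
    exact ⟨hPS.symm ▸ rfl, hQ, hR⟩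
  · rintro ⟨hS, hQ, hR⟩
    subst hS
    exact ⟨hR, rfl, transpose_transpose P, hQ⟩

lemma mem_L_of (A B C : Mn) (hB : Bᵀ = B) (hC : Cᵀ = C) :
    fromBlocks A B C Aᵀ ∈ Lset F n := (mem_L_iff A B C Aᵀ).2 ⟨rfl, hB, hC⟩

lemma comm_fromBlocks (A B C D A' B' C' D' : Mn) :
    fromBlocks A B C D * fromBlocks A' B' C' D' -
      fromBlocks A' B' C' D' * fromBlocks A B C D =
    fromBlocks (A * A' + B * C' + (A' * A + B' * C)) (A * B' + B * D' + (A' * B + B' * D))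
      (C * A' + D * C' + (C' * A + D' * C)) (C * B' + D * D' + (C' * B + D' * D)) := by
  rw [fromBlocks_multiply, fromBlocks_multiply, sub_mat, fromBlocks_add]


def upp (B : Mn) : Mn := Matrix.of fun i j => if i < j then B i j else 0

lemma upper_decomp (B : Mn) (hB : Bᵀ = B) :
    B = diagonal (fun i => B i i) + (upp B + (upp B)ᵀ) := by
  have hBe : ∀ a b, B b a = B a b := by
    intro a b; nth_rewrite 1 [← hB]; rw [transpose_apply]
  ext i j
  simp only [Matrix.add_apply, diagonal_apply, transpose_apply, upp, of_apply]
  rcases lt_trichotomy i j with h | h | h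
  · rw [if_neg h.ne, if_pos h, if_neg (asymm h), add_zero, zero_add]
  · subst h; simp
  · rw [if_neg h.ne', if_neg (asymm h), if_pos h, hBe, zero_add, zero_add]

lemma alt_decomp (B : Mn) (hB : Bᵀ = B) (hd : ∀ i, B i i = 0) :
    B = upp B + (upp B)ᵀ := by
  conv_lhs => rw [upper_decomp B hB]
  simp [funext hd]

lemma trace_MMt_mul (M C : Mn) (hC : Cᵀ = C) : trace ((M + Mᵀ) * C) = 0 := by
  have h : trace (Mᵀ * C) = trace (M * C) := by
    rw [← trace_transpose (Mᵀ * C), transpose_mul, transpose_transpose, hC, trace_mul_comm]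
  rw [add_mul, trace_add, h, CharTwo.add_self_eq_zero]

lemma trace_symm_mul (B C : Mn) (hB : Bᵀ = B) (hC : Cᵀ = C) :
    trace (B * C) = ∑ i, B i i * C i i := by
  conv_lhs => rw [upper_decomp B hB]
  rw [add_mul, trace_add, trace_MMt_mul _ _ hC, add_zero]
  simp [Matrix.trace, Matrix.diag, diagonal_mul]

lemma trace_alt_mul (B C : Mn) (hB : Bᵀ = B) (hd : ∀ i, B i i = 0) (hC : Cᵀ = C) :
    trace (B * C) = 0 := by
  rw [trace_symm_mul B C hB hC]
  simp [hd]

lemma diag_commQ (A A' B B' : Mn) (hB : Bᵀ = B) (hB' : B'ᵀ = B') (i : Fin n) :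
    (A * B' + B * A'ᵀ + (A' * B + B' * Aᵀ)) i i = 0 := by
  have hBe : ∀ a b, B a b = B b a := by
    intro a b; nth_rewrite 1 [← hB]; rw [transpose_apply]
  have hB'e : ∀ a b, B' a b = B' b a := by
    intro a b; nth_rewrite 1 [← hB']; rw [transpose_apply]
  have h2 : (2 : F) = 0 := CharTwo.two_eq_zero
  simp only [Matrix.add_apply, Matrix.mul_apply, transpose_apply]
  rw [← Finset.sum_add_distrib, ← Finset.sum_add_distrib, ← Finset.sum_add_distrib]
  apply Finset.sum_eq_zero
  intro j _
  rw [hB'e j i, hBe j i]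
  linear_combination (A i j * B' i j + A' i j * B i j) * h2

lemma diag_commR (A A' C C' : Mn) (hC : Cᵀ = C) (hC' : C'ᵀ = C') (i : Fin n) :
    (C * A' + Aᵀ * C' + (C' * A + A'ᵀ * C)) i i = 0 := by
  have hCe : ∀ a b, C a b = C b a := by
    intro a b; nth_rewrite 1 [← hC]; rw [transpose_apply]
  have hC'e : ∀ a b, C' a b = C' b a := by
    intro a b; nth_rewrite 1 [← hC']; rw [transpose_apply]
  have h2 : (2 : F) = 0 := CharTwo.two_eq_zero
  simp only [Matrix.add_apply, Matrix.mul_apply, transpose_apply]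
  rw [← Finset.sum_add_distrib, ← Finset.sum_add_distrib, ← Finset.sum_add_distrib]
  apply Finset.sum_eq_zero
  intro j _
  rw [hC'e j i, hCe j i]
  linear_combination (A j i * C' i j + A' j i * C i j) * h2


variable (F n) in
def T1 : Submodule F M2 where
  carrier := {Z | ∃ A B C : Mn, Z = fromBlocks A B C Aᵀ ∧
    (Bᵀ = B ∧ ∀ i, B i i = 0) ∧ (Cᵀ = C ∧ ∀ i, C i i = 0)}
  add_mem' := by
    rintro x y ⟨A, B, C, rfl, ⟨hB, hBd⟩, ⟨hC, hCd⟩⟩ ⟨A', B', C', rfl, ⟨hB', hB'd⟩, ⟨hC', hC'd⟩⟩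
    refine ⟨A + A', B + B', C + C', by rw [fromBlocks_add, transpose_add],
      ⟨by rw [transpose_add, hB, hB'], fun i => by simp [Matrix.add_apply, hBd i, hB'd i]⟩,
      ⟨by rw [transpose_add, hC, hC'], fun i => by simp [Matrix.add_apply, hCd i, hC'd i]⟩⟩
  zero_mem' := ⟨0, 0, 0, by simp, ⟨by simp, fun i => rfl⟩, ⟨by simp, fun i => rfl⟩⟩
  smul_mem' := by
    rintro c x ⟨A, B, C, rfl, ⟨hB, hBd⟩, ⟨hC, hCd⟩⟩
    refine ⟨c • A, c • B, c • C, by rw [fromBlocks_smul, transpose_smul],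
      ⟨by rw [transpose_smul, hB], fun i => by simp [Matrix.smul_apply, hBd i]⟩,
      ⟨by rw [transpose_smul, hC], fun i => by simp [Matrix.smul_apply, hCd i]⟩⟩

variable (F n) in
def T2 : Submodule F M2 where
  carrier := {Z | ∃ A B C : Mn, Z = fromBlocks A B C Aᵀ ∧
    (Bᵀ = B ∧ ∀ i, B i i = 0) ∧ (Cᵀ = C ∧ ∀ i, C i i = 0) ∧ A.trace = 0}
  add_mem' := by
    rintro x y ⟨A, B, C, rfl, ⟨hB, hBd⟩, ⟨hC, hCd⟩, hA⟩ ⟨A', B', C', rfl, ⟨hB', hB'd⟩, ⟨hC', hC'd⟩, hA'⟩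
    refine ⟨A + A', B + B', C + C', by rw [fromBlocks_add, transpose_add],
      ⟨by rw [transpose_add, hB, hB'], fun i => by simp [Matrix.add_apply, hBd i, hB'd i]⟩,
      ⟨by rw [transpose_add, hC, hC'], fun i => by simp [Matrix.add_apply, hCd i, hC'd i]⟩,
      by rw [trace_add, hA, hA', add_zero]⟩
  zero_mem' := ⟨0, 0, 0, by simp, ⟨by simp, fun i => rfl⟩, ⟨by simp, fun i => rfl⟩, by simp⟩
  smul_mem' := by
    rintro c x ⟨A, B, C, rfl, ⟨hB, hBd⟩, ⟨hC, hCd⟩, hA⟩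
    refine ⟨c • A, c • B, c • C, by rw [fromBlocks_smul, transpose_smul],
      ⟨by rw [transpose_smul, hB], fun i => by simp [Matrix.smul_apply, hBd i]⟩,
      ⟨by rw [transpose_smul, hC], fun i => by simp [Matrix.smul_apply, hCd i]⟩,
      by rw [trace_smul, hA, smul_zero]⟩

variable (F n) in
def φh : Mn →ₗ[F] M2 where
  toFun A := fromBlocks A 0 0 Aᵀ
  map_add' A A' := by simp [fromBlocks_add, transpose_add]
  map_smul' c A := by simp [fromBlocks_smul, transpose_smul]

variable (F n) in
def ψu : Mn →ₗ[F] M2 where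
  toFun M := fromBlocks 0 (M + Mᵀ) 0 0
  map_add' A A' := by
    simp only [transpose_add, fromBlocks_add, add_zero, fromBlocks_inj, true_and, and_true]
    abel
  map_smul' c A := by simp [fromBlocks_smul, transpose_smul, smul_add]

variable (F n) in
def ψv : Mn →ₗ[F] M2 where
  toFun M := fromBlocks 0 0 (M + Mᵀ) 0
  map_add' A A' := by
    simp only [transpose_add, fromBlocks_add, add_zero, fromBlocks_inj, true_and, and_true]
    abel
  map_smul' c A := by simp [fromBlocks_smul, transpose_smul, smul_add]

lemma span_helper (p : Submodule F Mn) (h : ∀ i j, Matrix.single i j (1 : F) ∈ p)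
    (A : Mn) : A ∈ p := by
  rw [matrix_eq_sum_single A]
  refine Submodule.sum_mem _ fun i _ => Submodule.sum_mem _ fun j _ => ?_
  rw [show Matrix.single i j (A i j) = (A i j) • Matrix.single i j (1 : F) by
    rw [smul_single, smul_eq_mul, mul_one]]
  exact p.smul_mem _ (h i j)


lemma mem_T1_iff (Z : M2) : Z ∈ T1 F n ↔ ∃ A B C : Mn, Z = fromBlocks A B C Aᵀ ∧
    (Bᵀ = B ∧ ∀ i, B i i = 0) ∧ (Cᵀ = C ∧ ∀ i, C i i = 0) := Iff.rfl

lemma mem_T2_iff (Z : M2) : Z ∈ T2 F n ↔ ∃ A B C : Mn, Z = fromBlocks A B C Aᵀ ∧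
    (Bᵀ = B ∧ ∀ i, B i i = 0) ∧ (Cᵀ = C ∧ ∀ i, C i i = 0) ∧ A.trace = 0 := Iff.rfl

lemma D1_le_T1 : D1' F n ≤ T1 F n := by
  rw [D1', Submodule.span_le]
  rintro Z ⟨X, hX, Y, hY, rfl⟩
  obtain ⟨A, B, C, S, rfl⟩ := exists_blocks X
  rw [mem_L_iff] at hX
  obtain ⟨rfl, hB, hC⟩ := hX
  obtain ⟨A', B', C', S', rfl⟩ := exists_blocks Y
  rw [mem_L_iff] at hY
  obtain ⟨rfl, hB', hC'⟩ := hY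
  rw [SetLike.mem_coe, mem_T1_iff, comm_fromBlocks]
  refine ⟨A * A' + B * C' + (A' * A + B' * C), A * B' + B * A'ᵀ + (A' * B + B' * Aᵀ),
      C * A' + Aᵀ * C' + (C' * A + A'ᵀ * C), ?_, ⟨?_, ?_⟩, ⟨?_, ?_⟩⟩
  · congr 1
    simp only [transpose_add, transpose_mul, transpose_transpose, hB, hC, hB', hC']
    abel
  · simp only [transpose_add, transpose_mul, transpose_transpose, hB, hB']
    abel
  · exact diag_commQ A A' B B' hB hB'
  · simp only [transpose_add, transpose_mul, transpose_transpose, hC, hC']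
    abel
  · exact diag_commR A A' C C' hC hC'

lemma D2_le_T2 : D2' F n ≤ T2 F n := by
  rw [D2', Submodule.span_le]
  rintro Z ⟨X, hX, Y, hY, rfl⟩
  replace hX := D1_le_T1 hX
  replace hY := D1_le_T1 hY
  obtain ⟨A, B, C, rfl, ⟨hB, hBd⟩, ⟨hC, hCd⟩⟩ := hX
  obtain ⟨A', B', C', rfl, ⟨hB', hB'd⟩, ⟨hC', hC'd⟩⟩ := hY
  rw [SetLike.mem_coe, mem_T2_iff, comm_fromBlocks]
  refine ⟨A * A' + B * C' + (A' * A + B' * C), A * B' + B * A'ᵀ + (A' * B + B' * Aᵀ),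
      C * A' + Aᵀ * C' + (C' * A + A'ᵀ * C), ?_, ⟨?_, ?_⟩, ⟨?_, ?_⟩, ?_⟩
  · congr 1
    simp only [transpose_add, transpose_mul, transpose_transpose, hB, hC, hB', hC']
    abel
  · simp only [transpose_add, transpose_mul, transpose_transpose, hB, hB']
    abel
  · exact diag_commQ A A' B B' hB hB'
  · simp only [transpose_add, transpose_mul, transpose_transpose, hC, hC']
    abel
  · exact diag_commR A A' C C' hC hC'
  · simp only [trace_add]
    rw [trace_alt_mul B C' hB hBd hC', trace_alt_mul B' C hB' hB'd hC,
      trace_mul_comm A' A]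
    simp [CharTwo.add_self_eq_zero]

lemma uB_mem_L (B : Mn) (hB : Bᵀ = B) : fromBlocks 0 B 0 (0 : Mn) ∈ Lset F n :=
  (mem_L_iff _ _ _ _).2 ⟨transpose_zero.symm, hB, transpose_zero⟩

lemma vB_mem_L (C : Mn) (hC : Cᵀ = C) : fromBlocks 0 0 C (0 : Mn) ∈ Lset F n :=
  (mem_L_iff _ _ _ _).2 ⟨transpose_zero.symm, transpose_zero, hC⟩

lemma hE_mem_D1 (i j : Fin n) : φh F n (Matrix.single i j (1 : F)) ∈ D1' F n := by
  apply Submodule.subset_span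
  by_cases hij : i = j
  · subst hij
    refine ⟨fromBlocks 0 (Matrix.single i i 1) 0 0,
      uB_mem_L _ (stdBasis_transpose i i 1),
      fromBlocks 0 0 (Matrix.single i i 1) 0,
      vB_mem_L _ (stdBasis_transpose i i 1), ?_⟩
    rw [comm_fromBlocks]
    simp [φh, LinearMap.coe_mk, AddHom.coe_mk, stdBasis_transpose]
    show fromBlocks _ 0 0 _ = _
    rw [stdBasis_transpose]
  · refine ⟨fromBlocks 0 (Matrix.single i i 1) 0 0,
      uB_mem_L _ (stdBasis_transpose i i 1),
      fromBlocks 0 0 (Matrix.single i j 1 + Matrix.single j i 1) 0,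
      vB_mem_L _ (by rw [transpose_add, stdBasis_transpose, stdBasis_transpose, add_comm]), ?_⟩
    rw [comm_fromBlocks]
    simp [φh, LinearMap.coe_mk, AddHom.coe_mk, stdBasis_transpose, mul_add, add_mul,
      Matrix.single_mul_single_of_ne, hij, Ne.symm hij]
    show fromBlocks _ 0 0 _ = _
    rw [stdBasis_transpose]

lemma hA_mem_D1 (A : Mn) : fromBlocks A 0 0 Aᵀ ∈ D1' F n :=
  span_helper ((D1' F n).comap (φh F n)) (fun i j => hE_mem_D1 i j) A

lemma uM_mem_D1 (M : Mn) : fromBlocks 0 (M + Mᵀ) 0 0 ∈ D1' F n := by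
  apply Submodule.subset_span
  refine ⟨fromBlocks M 0 0 Mᵀ, mem_L_of M 0 0 transpose_zero transpose_zero,
    fromBlocks 0 1 0 0, uB_mem_L 1 transpose_one, ?_⟩
  rw [comm_fromBlocks]
  simp

lemma vM_mem_D1 (M : Mn) : fromBlocks 0 0 (M + Mᵀ) 0 ∈ D1' F n := by
  apply Submodule.subset_span
  refine ⟨fromBlocks M 0 0 Mᵀ, mem_L_of M 0 0 transpose_zero transpose_zero,
    fromBlocks 0 0 1 0, vB_mem_L 1 transpose_one, ?_⟩
  rw [comm_fromBlocks]
  simp [add_comm]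

lemma T1_le_D1 : T1 F n ≤ D1' F n := by
  rintro Z ⟨A, B, C, rfl, ⟨hB, hBd⟩, ⟨hC, hCd⟩⟩
  have hsplit : fromBlocks A B C Aᵀ =
      fromBlocks A 0 0 Aᵀ + fromBlocks 0 B 0 0 + fromBlocks 0 0 C 0 := by
    rw [fromBlocks_add, fromBlocks_add]
    simp
  rw [hsplit]
  refine add_mem (add_mem (hA_mem_D1 A) ?_) ?_
  · rw [alt_decomp B hB hBd]
    exact uM_mem_D1 _
  · rw [alt_decomp C hC hCd]
    exact vM_mem_D1 _

lemma D1_eq_T1 : D1' F n = T1 F n := le_antisymm D1_le_T1 T1_le_D1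

lemma stdE_add_self (i j : Fin n) :
    Matrix.single i j (1 : F) + Matrix.single i j (1 : F) = 0 := by
  ext a b; simp [CharTwo.add_self_eq_zero]

lemma hE2_offdiag (i j : Fin n) (hij : i ≠ j) :
    φh F n (Matrix.single i j (1 : F)) ∈ D2' F n := by
  apply Submodule.subset_span
  refine ⟨φh F n (Matrix.single i i (1 : F)), hA_mem_D1 _,
    φh F n (Matrix.single i j (1 : F)), hA_mem_D1 _, ?_⟩
  show fromBlocks _ 0 0 _ = fromBlocks _ 0 0 _ * fromBlocks _ 0 0 _ -
    fromBlocks _ 0 0 _ * fromBlocks _ 0 0 _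
  rw [comm_fromBlocks]
  simp [stdBasis_transpose, Matrix.single_mul_single_of_ne, hij, Ne.symm hij]

lemma hE2_diag (i : Fin n) (hn : 1 ≤ n) :
    φh F n (Matrix.single i i (1 : F) + Matrix.single ⟨0, hn⟩ ⟨0, hn⟩ (1 : F)) ∈ D2' F n := by
  set z : Fin n := ⟨0, hn⟩ with hz
  by_cases hi : i = z
  · subst hi
    rw [stdE_add_self, map_zero]
    exact Submodule.zero_mem _
  · apply Submodule.subset_span
    refine ⟨φh F n (Matrix.single z i (1 : F)), hA_mem_D1 _,
      φh F n (Matrix.single i z (1 : F)), hA_mem_D1 _, ?_⟩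
    show fromBlocks _ 0 0 _ = fromBlocks _ 0 0 _ * fromBlocks _ 0 0 _ -
      fromBlocks _ 0 0 _ * fromBlocks _ 0 0 _
    rw [comm_fromBlocks]
    simp only [Matrix.mul_zero, Matrix.zero_mul, add_zero, zero_add,
      Matrix.single_mul_single_same, mul_one, stdBasis_transpose, transpose_add]
    rw [fromBlocks_inj]
    refine ⟨by rw [add_comm], rfl, rfl, by rw [add_comm]⟩

lemma uE2 (i j : Fin n) : ψu F n (Matrix.single i j (1 : F)) ∈ D2' F n := by
  by_cases hij : i = j
  · subst hij
    show fromBlocks 0 _ 0 0 ∈ D2' F n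
    rw [stdBasis_transpose, stdE_add_self]
    convert Submodule.zero_mem (D2' F n) using 1
    simp
  · apply Submodule.subset_span
    refine ⟨φh F n (Matrix.single i i (1 : F)), hA_mem_D1 _,
      ψu F n (Matrix.single i j (1 : F)), uM_mem_D1 _, ?_⟩
    show fromBlocks 0 _ 0 0 = fromBlocks _ 0 0 _ * fromBlocks 0 _ 0 0 -
      fromBlocks 0 _ 0 0 * fromBlocks _ 0 0 _
    rw [comm_fromBlocks]
    simp [stdBasis_transpose, mul_add, add_mul,
      Matrix.single_mul_single_of_ne, hij, Ne.symm hij]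

lemma vE2 (i j : Fin n) : ψv F n (Matrix.single i j (1 : F)) ∈ D2' F n := by
  by_cases hij : i = j
  · subst hij
    show fromBlocks 0 0 _ 0 ∈ D2' F n
    rw [stdBasis_transpose, stdE_add_self]
    convert Submodule.zero_mem (D2' F n) using 1
    simp
  · apply Submodule.subset_span
    refine ⟨φh F n (Matrix.single i i (1 : F)), hA_mem_D1 _,
      ψv F n (Matrix.single i j (1 : F)), vM_mem_D1 _, ?_⟩
    show fromBlocks 0 0 _ 0 = fromBlocks _ 0 0 _ * fromBlocks 0 0 _ 0 -
      fromBlocks 0 0 _ 0 * fromBlocks _ 0 0 _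
    rw [comm_fromBlocks]
    simp [stdBasis_transpose, mul_add, add_mul,
      Matrix.single_mul_single_of_ne, hij, Ne.symm hij]

lemma uM_mem_D2 (M : Mn) : fromBlocks 0 (M + Mᵀ) 0 0 ∈ D2' F n :=
  span_helper ((D2' F n).comap (ψu F n)) (fun i j => uE2 i j) M

lemma vM_mem_D2 (M : Mn) : fromBlocks 0 0 (M + Mᵀ) 0 ∈ D2' F n :=
  span_helper ((D2' F n).comap (ψv F n)) (fun i j => vE2 i j) M

lemma hA_mem_D2 (hn : 1 ≤ n) (A : Mn) (htr : A.trace = 0) :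
    fromBlocks A 0 0 Aᵀ ∈ D2' F n := by
  set z : Fin n := ⟨0, hn⟩ with hz
  have hd : A = ∑ i, ∑ j, A i j •
      (Matrix.single i j (1 : F) + if i = j then Matrix.single z z (1 : F) else 0) := by
    have h1 : ∀ i : Fin n, (∑ j, A i j • (if i = j then Matrix.single z z (1 : F) else 0)) =
        A i i • Matrix.single z z (1 : F) := by
      intro i
      rw [Finset.sum_eq_single i (fun j _ hj => by rw [if_neg fun h => hj h.symm, smul_zero])
        (fun h => absurd (Finset.mem_univ i) h)]
      rw [if_pos rfl]
    have htr' : ∑ i, A i i = 0 := by rw [← htr]; rfl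
    simp only [smul_add, Finset.sum_add_distrib]
    rw [Finset.sum_congr rfl (fun i _ => h1 i), ← Finset.sum_smul, htr', zero_smul, add_zero]
    conv_lhs => rw [matrix_eq_sum_single A]
    exact Finset.sum_congr rfl fun i _ => Finset.sum_congr rfl fun j _ => by
      rw [smul_single, smul_eq_mul, mul_one]
  have key : φh F n (∑ i, ∑ j, A i j •
      (Matrix.single i j (1 : F) + if i = j then Matrix.single z z (1 : F) else 0)) ∈ D2' F n := by
    rw [map_sum]
    refine Submodule.sum_mem _ fun i _ => ?_
    rw [map_sum]
    refine Submodule.sum_mem _ fun j _ => ?_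
    rw [_root_.map_smul]
    refine Submodule.smul_mem _ _ ?_
    by_cases hij : i = j
    · subst hij
      simp only [if_pos rfl]
      exact hE2_diag i hn
    · simp only [if_neg hij, add_zero]
      exact hE2_offdiag i j hij
  rw [← hd] at key
  exact key

lemma T2_le_D2 (hn : 1 ≤ n) : T2 F n ≤ D2' F n := by
  rintro Z ⟨A, B, C, rfl, ⟨hB, hBd⟩, ⟨hC, hCd⟩, htr⟩
  have hsplit : fromBlocks A B C Aᵀ =
      fromBlocks A 0 0 Aᵀ + fromBlocks 0 B 0 0 + fromBlocks 0 0 C 0 := by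
    rw [fromBlocks_add, fromBlocks_add]
    simp
  rw [hsplit]
  refine add_mem (add_mem (hA_mem_D2 hn A htr) ?_) ?_
  · rw [alt_decomp B hB hBd]
    exact uM_mem_D2 _
  · rw [alt_decomp C hC hCd]
    exact vM_mem_D2 _

lemma D2_eq_T2 (hn : 1 ≤ n) : D2' F n = T2 F n := le_antisymm D2_le_T2 (T2_le_D2 hn)

variable (F n) in
def θmap : M2 →ₗ[F] (Fin n → F) × (Fin n → F) × F where
  toFun X := (fun i => X (Sum.inl i) (Sum.inr i), fun i => X (Sum.inr i) (Sum.inl i),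
    ∑ i, X (Sum.inl i) (Sum.inl i))
  map_add' X Y := by
    simp only [Matrix.add_apply, Prod.mk_add_mk, Prod.mk.injEq, Finset.sum_add_distrib]
    exact ⟨rfl, rfl, trivial⟩
  map_smul' c X := by
    simp only [Matrix.smul_apply, RingHom.id_apply, Prod.smul_mk, Prod.mk.injEq,
      Finset.smul_sum]
    exact ⟨rfl, rfl, trivial⟩

lemma θ_fromBlocks (A B C D : Mn) :
    θmap F n (fromBlocks A B C D) = (fun i => B i i, fun i => C i i, A.trace) := by
  simp only [θmap, LinearMap.coe_mk, AddHom.coe_mk, fromBlocks_apply₁₁, fromBlocks_apply₁₂,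
    fromBlocks_apply₂₁]
  rfl

end Stmt18

open Stmt18 in
/-- Characteristic 2: the derived and second derived algebras of the symplectic
Lie algebra `L(J)`, and the quotient `L(J)/L(J)⁽²⁾ ≅ h(n)` (the Heisenberg
Lie algebra of dimension `2n+1`, encoded concretely on
`(Fin n → F) × (Fin n → F) × F` with bracket `[(p,q,c),(p',q',c')] = (0,0,p⬝q'-p'⬝q)`). -/
theorem stmt_18 (F : Type*) [Field F] [CharP F 2] (n : ℕ) (hn : 1 ≤ n) :
    let J : Matrix (Fin n ⊕ Fin n) (Fin n ⊕ Fin n) F := Matrix.fromBlocks 0 1 1 0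
    let L : Set (Matrix (Fin n ⊕ Fin n) (Fin n ⊕ Fin n) F) := {X | Xᵀ * J = J * X}
    let D1 : Submodule F (Matrix (Fin n ⊕ Fin n) (Fin n ⊕ Fin n) F) :=
      Submodule.span F {Z | ∃ X ∈ L, ∃ Y ∈ L, Z = X * Y - Y * X}
    let D2 : Submodule F (Matrix (Fin n ⊕ Fin n) (Fin n ⊕ Fin n) F) :=
      Submodule.span F {Z | ∃ X ∈ D1, ∃ Y ∈ D1, Z = X * Y - Y * X}
    (∀ Z, Z ∈ D1 ↔ ∃ A B C : Matrix (Fin n) (Fin n) F,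
        Z = Matrix.fromBlocks A B C Aᵀ ∧
        (Bᵀ = B ∧ ∀ i, B i i = 0) ∧ (Cᵀ = C ∧ ∀ i, C i i = 0)) ∧
    (∀ Z, Z ∈ D2 ↔ ∃ A B C : Matrix (Fin n) (Fin n) F,
        Z = Matrix.fromBlocks A B C Aᵀ ∧
        (Bᵀ = B ∧ ∀ i, B i i = 0) ∧ (Cᵀ = C ∧ ∀ i, C i i = 0) ∧ A.trace = 0) ∧
    (∃ θ : Matrix (Fin n ⊕ Fin n) (Fin n ⊕ Fin n) F →ₗ[F]
        ((Fin n → F) × (Fin n → F) × F),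
      (∀ h : (Fin n → F) × (Fin n → F) × F, ∃ X ∈ L, θ X = h) ∧
      (∀ X ∈ L, (θ X = 0 ↔ X ∈ D2)) ∧
      (∀ X ∈ L, ∀ Y ∈ L, θ (X * Y - Y * X) =
        (0, 0, (θ X).1 ⬝ᵥ (θ Y).2.1 - (θ Y).1 ⬝ᵥ (θ X).2.1))) := by
  intro J L D1 D2
  have hL : L = Lset F n := rfl
  have hD1 : D1 = D1' F n := rfl
  have hD2 : D2 = D2' F n := rfl
  have h2 : (2 : F) = 0 := CharTwo.two_eq_zero
  set z : Fin n := ⟨0, hn⟩ with hz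
  refine ⟨?_, ?_, ?_⟩
  · intro Z
    rw [hD1, D1_eq_T1]
    exact mem_T1_iff Z
  · intro Z
    rw [hD2, D2_eq_T2 hn]
    exact mem_T2_iff Z
  · refine ⟨θmap F n, ?_, ?_, ?_⟩
    · rintro ⟨p, q, c⟩
      refine ⟨fromBlocks (c • Matrix.single z z 1) (diagonal p) (diagonal q)
        (c • Matrix.single z z 1)ᵀ, ?_, ?_⟩
      · rw [hL]
        exact mem_L_of _ _ _ (diagonal_transpose p) (diagonal_transpose q)
      · rw [θ_fromBlocks]
        refine Prod.ext_iff.2 ⟨funext fun i => ?_, Prod.ext_iff.2 ⟨funext fun i => ?_, ?_⟩⟩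
        · exact diagonal_apply_eq p i
        · exact diagonal_apply_eq q i
        · show trace (c • Matrix.single z z (1 : F)) = c
          rw [trace_smul, Matrix.trace_single_eq_same, smul_eq_mul, mul_one]
    · intro X hX
      rw [hL] at hX
      obtain ⟨A, B, C, S, rfl⟩ := exists_blocks X
      rw [mem_L_iff] at hX
      obtain ⟨rfl, hB, hC⟩ := hX
      rw [hD2, D2_eq_T2 hn, θ_fromBlocks]
      have h0eq : (0 : (Fin n → F) × (Fin n → F) × F) = (0, 0, 0) := rfl
      rw [h0eq, Prod.mk.injEq, Prod.mk.injEq]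
      constructor
      · rintro ⟨h1, hr2, h3⟩
        exact ⟨A, B, C, rfl, ⟨hB, fun i => congrFun h1 i⟩,
          ⟨hC, fun i => congrFun hr2 i⟩, h3⟩
      · rintro ⟨A', B', C', hEq, ⟨hB', hB'd⟩, ⟨hC', hC'd⟩, htr'⟩
        rw [fromBlocks_inj] at hEq
        obtain ⟨rfl, rfl, rfl, -⟩ := hEq
        exact ⟨funext fun i => hB'd i, funext fun i => hC'd i, htr'⟩
    · intro X hX Y hY
      rw [hL] at hX hY
      obtain ⟨A, B, C, S, rfl⟩ := exists_blocks X
      rw [mem_L_iff] at hX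
      obtain ⟨rfl, hB, hC⟩ := hX
      obtain ⟨A', B', C', S', rfl⟩ := exists_blocks Y
      rw [mem_L_iff] at hY
      obtain ⟨rfl, hB', hC'⟩ := hY
      rw [comm_fromBlocks, θ_fromBlocks, θ_fromBlocks, θ_fromBlocks]
      rw [Prod.mk.injEq, Prod.mk.injEq]
      refine ⟨funext fun i => diag_commQ A A' B B' hB hB' i,
        funext fun i => diag_commR A A' C C' hC hC' i, ?_⟩
      simp only [trace_add]
      rw [trace_symm_mul B C' hB hC', trace_symm_mul B' C hB' hC, trace_mul_comm A' A]
      simp only [dotProduct]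
      linear_combination (trace (A * A') + ∑ i, B' i i * C i i) * h2
end
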